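/- Among all orthonormal sets {w_1,…,w_r} in ℝ^m, the first r left singular vectors of the snapshot matrix S ∈ ℝ^{m×n} minimize the snapshot reconstruction error ‖S − W Wᵀ S‖_F, where W = [w_1,…,w_r]; the minimum value is (Σ_{i>r} σ_i²)^{1/2}. -/

import Mathlib

open Matrix Finset

lemma frob_eq_trace {m n : ℕ} (A : Matrix (Fin m) (Fin n) ℝ) :
    ∑ i, ∑ j, (A i j)^2 = Matrix.trace (Aᵀ * A) := by
  simp only [Matrix.trace, Matrix.diag, Matrix.mul_apply, Matrix.transpose_apply, sq]
  exact Finset.sum_comm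

lemma trace_pythagoras {m n r : ℕ} (S : Matrix (Fin m) (Fin n) ℝ)
    (W : Matrix (Fin m) (Fin r) ℝ) (hW : Wᵀ * W = 1) :
    Matrix.trace ((S - W * Wᵀ * S)ᵀ * (S - W * Wᵀ * S)) =
      Matrix.trace (Sᵀ * S) - Matrix.trace ((Wᵀ * S)ᵀ * (Wᵀ * S)) := by
  have h1 : (S - W * Wᵀ * S)ᵀ * (S - W * Wᵀ * S) = Sᵀ * S - (Wᵀ * S)ᵀ * (Wᵀ * S) := by
    have hP : (W * Wᵀ * S)ᵀ * (W * Wᵀ * S) = (Wᵀ * S)ᵀ * (Wᵀ * S) := by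
      calc (W * Wᵀ * S)ᵀ * (W * Wᵀ * S)
          = Sᵀ * W * ((Wᵀ * W) * (Wᵀ * S)) := by
            simp only [Matrix.transpose_mul, Matrix.transpose_transpose, Matrix.mul_assoc]
        _ = (Wᵀ * S)ᵀ * (Wᵀ * S) := by
            rw [hW, Matrix.one_mul]
            simp only [Matrix.transpose_mul, Matrix.transpose_transpose, Matrix.mul_assoc]
    have hC : Sᵀ * (W * Wᵀ * S) = (Wᵀ * S)ᵀ * (Wᵀ * S) := by
      simp only [Matrix.transpose_mul, Matrix.transpose_transpose, Matrix.mul_assoc]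
    have hC2 : (W * Wᵀ * S)ᵀ * S = (Wᵀ * S)ᵀ * (Wᵀ * S) := by
      simp only [Matrix.transpose_mul, Matrix.transpose_transpose, Matrix.mul_assoc]
    rw [Matrix.transpose_sub, Matrix.sub_mul, Matrix.mul_sub, Matrix.mul_sub, hP, hC, hC2]
    abel
  rw [h1, Matrix.trace_sub]

lemma proj_diag_bound {m r : ℕ} (Q : Matrix (Fin m) (Fin r) ℝ) (hQ : Qᵀ * Q = 1)
    (i : Fin m) : (Q * Qᵀ) i i ≤ 1 := by
  set P := Q * Qᵀ with hPdef
  have hidem : P * P = P := by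
    rw [hPdef, Matrix.mul_assoc, ← Matrix.mul_assoc Qᵀ, hQ, Matrix.one_mul]
  have hsymm : Pᵀ = P := by rw [hPdef, Matrix.transpose_mul, Matrix.transpose_transpose]
  have h1 : (P i i)^2 ≤ ∑ j, (P i j)^2 := by
    have := Finset.single_le_sum (f := fun j => (P i j)^2)
      (fun j _ => sq_nonneg _) (Finset.mem_univ i)
    exact this
  have h2 : ∑ j, (P i j)^2 = P i i := by
    conv_rhs => rw [← hidem]
    simp only [Matrix.mul_apply]
    refine Finset.sum_congr rfl fun j _ => ?_
    have h3 : P j i = P i j := (congrFun (congrFun hsymm j) i).symm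
    rw [h3]; ring
  nlinarith [h1, h2]

lemma trace_QQT {m r : ℕ} (Q : Matrix (Fin m) (Fin r) ℝ) (hQ : Qᵀ * Q = 1) :
    Matrix.trace (Q * Qᵀ) = (r : ℝ) := by
  rw [Matrix.trace_mul_comm, hQ, Matrix.trace_one]
  simp

lemma right_orth_invariance {p n : ℕ} (A : Matrix (Fin p) (Fin n) ℝ)
    (V : Matrix (Fin n) (Fin n) ℝ) (hV : Vᵀ * V = 1) :
    Matrix.trace ((A * Vᵀ)ᵀ * (A * Vᵀ)) = Matrix.trace (Aᵀ * A) := by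
  rw [Matrix.transpose_mul, Matrix.transpose_transpose, Matrix.trace_mul_comm,
    Matrix.mul_assoc, ← Matrix.mul_assoc Vᵀ V Aᵀ, hV, Matrix.one_mul,
    Matrix.trace_mul_comm]

lemma sigma_sigmaT {m n : ℕ} (σ : ℕ → ℝ) (hσ0 : ∀ i, min m n ≤ i → σ i = 0) :
    (Matrix.of fun (i : Fin m) (j : Fin n) => if (i : ℕ) = (j : ℕ) then σ i else 0) *
      (Matrix.of fun (i : Fin m) (j : Fin n) => if (i : ℕ) = (j : ℕ) then σ i else 0)ᵀ =
    Matrix.of fun (i i' : Fin m) => if i = i' then (σ i)^2 else 0 := by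
  ext i i'
  simp only [Matrix.mul_apply, Matrix.transpose_apply, Matrix.of_apply]
  by_cases h : i = i'
  · subst h
    simp only [if_pos rfl]
    by_cases hn : (i : ℕ) < n
    · rw [Finset.sum_eq_single (⟨i, hn⟩ : Fin n)]
      · simp [sq]
      · intro b _ hb
        have : (i : ℕ) ≠ (b : ℕ) := by
          intro hc
          exact hb (by ext; simp [← hc])
        simp [this]
      · simp
    · have h0 : σ i = 0 := hσ0 _ (le_trans (min_le_right m n) (le_of_not_gt hn))
      rw [h0]
      refine (Finset.sum_eq_zero fun j _ => ?_).trans (by simp)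
      have : (i : ℕ) ≠ (j : ℕ) := fun hc => hn (hc ▸ j.2)
      simp [this]
  · have hne : (i : ℕ) ≠ (i' : ℕ) := fun hc => h (Fin.ext hc)
    rw [if_neg h]
    refine Finset.sum_eq_zero fun j _ => ?_
    by_cases h1 : (i : ℕ) = (j : ℕ)
    · have : (i' : ℕ) ≠ (j : ℕ) := fun hc => hne (h1.trans hc.symm)
      simp [this]
    · simp [h1]

lemma trace_mul_diag {m : ℕ} (P : Matrix (Fin m) (Fin m) ℝ) (d : Fin m → ℝ) :
    Matrix.trace (P * Matrix.of fun (i i' : Fin m) => if i = i' then d i else 0) =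
      ∑ i, P i i * d i := by
  simp only [Matrix.trace, Matrix.diag, Matrix.mul_apply, Matrix.of_apply]
  refine Finset.sum_congr rfl fun i _ => ?_
  rw [Finset.sum_eq_single i]
  · simp
  · intro b _ hb
    simp [hb]
  · simp

lemma fin_sum_ite {m r : ℕ} (hrm : r ≤ m) (f : ℕ → ℝ) :
    ∑ i : Fin m, (if (i : ℕ) < r then f i else 0) = ∑ i ∈ Finset.range r, f i := by
  rw [Fin.sum_univ_eq_sum_range (fun i => if i < r then f i else 0) m]
  rw [← Finset.sum_subset (Finset.range_subset_range.mpr hrm)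
    (fun x _ hx => if_neg (by simpa using hx))]
  exact Finset.sum_congr rfl fun x hx => if_pos (Finset.mem_range.mp hx)

lemma weighted_bound {m r : ℕ} (hrm : r ≤ m) (σ : ℕ → ℝ) (hnn : ∀ i, 0 ≤ σ i)
    (hord : ∀ i j : ℕ, i ≤ j → σ j ≤ σ i) (t : Fin m → ℝ)
    (ht0 : ∀ i, 0 ≤ t i) (ht1 : ∀ i, t i ≤ 1) (hsum : ∑ i, t i = (r : ℝ)) :
    ∑ i : Fin m, (σ i)^2 * t i ≤ ∑ i ∈ Finset.range r, (σ i)^2 := by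
  set s := (σ r)^2 with hs
  have key : ∀ i : Fin m, (σ i)^2 * t i ≤
      s * t i + (if (i : ℕ) < r then (σ i)^2 - s else 0) := by
    intro i
    by_cases hir : (i : ℕ) < r
    · have h1 : s ≤ (σ i)^2 := by
        have := hord i r (le_of_lt hir)
        exact pow_le_pow_left₀ (hnn r) this 2
      rw [if_pos hir]
      nlinarith [ht1 i]
    · have h1 : (σ i)^2 ≤ s := by
        have := hord r i (le_of_not_gt hir)
        exact pow_le_pow_left₀ (hnn i) this 2
      rw [if_neg hir]
      nlinarith [ht0 i]
  calc ∑ i : Fin m, (σ i)^2 * t i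
      ≤ ∑ i : Fin m, (s * t i + (if (i : ℕ) < r then (σ i)^2 - s else 0)) :=
        Finset.sum_le_sum fun i _ => key i
    _ = s * (∑ i, t i) + ∑ i : Fin m, (if (i : ℕ) < r then (σ i)^2 - s else 0) := by
        rw [Finset.sum_add_distrib, Finset.mul_sum]
    _ = s * r + (∑ i ∈ Finset.range r, ((σ i)^2 - s)) := by
        rw [hsum, fin_sum_ite hrm (fun i => (σ i)^2 - s)]
    _ = s * r + ((∑ i ∈ Finset.range r, (σ i)^2) - r * s) := by
        rw [Finset.sum_sub_distrib, Finset.sum_const, Finset.card_range, nsmul_eq_mul]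
    _ = ∑ i ∈ Finset.range r, (σ i)^2 := by ring

lemma traceQsigma {m n r : ℕ} (σ : ℕ → ℝ) (hσ0 : ∀ i, min m n ≤ i → σ i = 0)
    (Q : Matrix (Fin m) (Fin r) ℝ) :
    Matrix.trace ((Qᵀ * (Matrix.of fun (i : Fin m) (j : Fin n) =>
        if (i : ℕ) = (j : ℕ) then σ i else 0))ᵀ *
      (Qᵀ * (Matrix.of fun (i : Fin m) (j : Fin n) =>
        if (i : ℕ) = (j : ℕ) then σ i else 0))) =
    ∑ i : Fin m, (Q * Qᵀ) i i * (σ i)^2 := by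
  set Sg := (Matrix.of fun (i : Fin m) (j : Fin n) =>
    if (i : ℕ) = (j : ℕ) then σ i else 0) with hSg
  rw [Matrix.transpose_mul, Matrix.transpose_transpose, Matrix.trace_mul_comm,
    Matrix.mul_assoc, ← Matrix.mul_assoc Sg Sgᵀ Q, Matrix.trace_mul_comm,
    Matrix.mul_assoc, Matrix.trace_mul_comm, ← Matrix.mul_assoc,
    Matrix.mul_assoc (Q * Qᵀ) Sg Sgᵀ, hSg, sigma_sigmaT σ hσ0,
    trace_mul_diag (Q * Qᵀ) (fun i => (σ i)^2)]

/-- POD optimality (Eckart–Young): among all matrices W with r orthonormal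
columns, the first r left singular vectors minimize ‖S − W Wᵀ S‖_F, and the
minimum value is (Σ_{i>r} σ_i²)^{1/2}. -/
theorem pod_optimality (m n r : ℕ) (hrm : r ≤ m)
    (S : Matrix (Fin m) (Fin n) ℝ)
    (U : Matrix (Fin m) (Fin m) ℝ) (V : Matrix (Fin n) (Fin n) ℝ)
    (σ : ℕ → ℝ) (hnn : ∀ i, 0 ≤ σ i)
    (hord : ∀ i j : ℕ, i ≤ j → σ j ≤ σ i)
    (hσ0 : ∀ i, min m n ≤ i → σ i = 0)
    (hU : Uᵀ * U = 1) (hUU : U * Uᵀ = 1) (hV : Vᵀ * V = 1) (hVV : V * Vᵀ = 1)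
    (hSVD : S = U * (Matrix.of fun (i : Fin m) (j : Fin n) =>
      if (i : ℕ) = (j : ℕ) then σ i else 0) * Vᵀ)
    (Ur : Matrix (Fin m) (Fin r) ℝ)
    (hUrdef : Ur = Matrix.of fun (i : Fin m) (k : Fin r) => U i ⟨k, lt_of_lt_of_le k.2 hrm⟩) :
    (∀ W : Matrix (Fin m) (Fin r) ℝ, Wᵀ * W = 1 →
      Real.sqrt (∑ i : Fin m, ∑ j : Fin n, ((S - Ur * Urᵀ * S) i j) ^ 2) ≤
        Real.sqrt (∑ i : Fin m, ∑ j : Fin n, ((S - W * Wᵀ * S) i j) ^ 2)) ∧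
    Real.sqrt (∑ i : Fin m, ∑ j : Fin n, ((S - Ur * Urᵀ * S) i j) ^ 2) =
      Real.sqrt (∑ i ∈ Finset.Ico r (min m n), σ i ^ 2) := by
  have hUr1 : Urᵀ * Ur = 1 := by
    ext k k'
    simp only [hUrdef, Matrix.mul_apply, Matrix.transpose_apply, Matrix.of_apply]
    have h := congrFun (congrFun hU ⟨k, lt_of_lt_of_le k.2 hrm⟩)
      ⟨k', lt_of_lt_of_le k'.2 hrm⟩
    simp only [Matrix.mul_apply, Matrix.transpose_apply, Matrix.one_apply] at h ⊢
    rw [h]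
    by_cases hkk : k = k'
    · subst hkk; simp
    · have hne : (k : ℕ) ≠ (k' : ℕ) := fun hc => hkk (Fin.ext hc)
      simp [Fin.ext_iff, hne]
  -- trace of SᵀS
  have hm : ∑ i ∈ Finset.range m, σ i ^ 2 = ∑ i ∈ Finset.range (min m n), σ i ^ 2 := by
    symm
    apply Finset.sum_subset (Finset.range_subset_range.mpr (min_le_left m n))
    intro x _ hx
    have hge : min m n ≤ x := by
      by_contra hc
      exact hx (Finset.mem_range.mpr (lt_of_not_ge hc))
    rw [hσ0 x hge]; ring
  have trS : Matrix.trace (Sᵀ * S) = ∑ i ∈ Finset.range (min m n), σ i ^ 2 := by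
    have h1 : S = (U * (Matrix.of fun (i : Fin m) (j : Fin n) =>
        if (i : ℕ) = (j : ℕ) then σ i else 0)) * Vᵀ := hSVD
    rw [h1, right_orth_invariance _ V hV, Matrix.transpose_mul, Matrix.mul_assoc,
      ← Matrix.mul_assoc Uᵀ U _, hU, Matrix.one_mul, Matrix.trace_mul_comm,
      sigma_sigmaT σ hσ0]
    simp only [Matrix.trace, Matrix.diag, Matrix.of_apply, eq_self_iff_true, if_true]
    rw [Fin.sum_univ_eq_sum_range (fun i => σ i ^ 2) m, hm]
  -- pythagoras + invariances per W
  have main : ∀ W : Matrix (Fin m) (Fin r) ℝ, Wᵀ * W = 1 →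
      Matrix.trace ((S - W * Wᵀ * S)ᵀ * (S - W * Wᵀ * S)) =
        Matrix.trace (Sᵀ * S) - ∑ i : Fin m, ((Uᵀ * W) * (Uᵀ * W)ᵀ) i i * σ i ^ 2 := by
    intro W hW
    rw [trace_pythagoras S W hW]
    congr 1
    have h2 : Wᵀ * S = ((Uᵀ * W)ᵀ * (Matrix.of fun (i : Fin m) (j : Fin n) =>
        if (i : ℕ) = (j : ℕ) then σ i else 0)) * Vᵀ := by
      rw [hSVD, Matrix.transpose_mul, Matrix.transpose_transpose]
      simp only [Matrix.mul_assoc]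
    rw [h2, right_orth_invariance _ V hV, traceQsigma σ hσ0 (Uᵀ * W)]
  -- Q for general W is orthonormal
  have hQorth : ∀ W : Matrix (Fin m) (Fin r) ℝ, Wᵀ * W = 1 →
      (Uᵀ * W)ᵀ * (Uᵀ * W) = 1 := by
    intro W hW
    rw [Matrix.transpose_mul, Matrix.transpose_transpose, Matrix.mul_assoc,
      ← Matrix.mul_assoc U Uᵀ W, hUU, Matrix.one_mul, hW]
  -- the diagonal of Q_r
  have hQUr : Uᵀ * Ur = Matrix.of fun (i : Fin m) (k : Fin r) =>
      if (i : ℕ) = (k : ℕ) then 1 else 0 := by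
    ext i k
    simp only [Matrix.mul_apply, Matrix.transpose_apply, hUrdef, Matrix.of_apply]
    have h := congrFun (congrFun hU i) ⟨k, lt_of_lt_of_le k.2 hrm⟩
    simp only [Matrix.mul_apply, Matrix.transpose_apply, Matrix.one_apply] at h
    rw [h]
    by_cases hik : (i : ℕ) = (k : ℕ) <;> simp [Fin.ext_iff, hik]
  have hUrdiag : ∀ i : Fin m, ((Uᵀ * Ur) * (Uᵀ * Ur)ᵀ) i i =
      if (i : ℕ) < r then 1 else 0 := by
    intro i
    rw [hQUr]
    simp only [Matrix.mul_apply, Matrix.transpose_apply, Matrix.of_apply]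
    by_cases hir : (i : ℕ) < r
    · rw [if_pos hir, Finset.sum_eq_single (⟨i, hir⟩ : Fin r)]
      · simp
      · intro b _ hb
        have : (i : ℕ) ≠ (b : ℕ) := fun hc => hb (by ext; simp [← hc])
        simp [this]
      · simp
    · rw [if_neg hir]
      refine Finset.sum_eq_zero fun k _ => ?_
      have : (i : ℕ) ≠ (k : ℕ) := fun hc => hir (hc ▸ k.2)
      simp [this]
  have hUrsum : ∑ i : Fin m, ((Uᵀ * Ur) * (Uᵀ * Ur)ᵀ) i i * σ i ^ 2 =
      ∑ i ∈ Finset.range r, σ i ^ 2 := by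
    rw [← fin_sum_ite hrm (fun i => σ i ^ 2)]
    refine Finset.sum_congr rfl fun i _ => ?_
    rw [hUrdiag i]
    by_cases hir : (i : ℕ) < r <;> simp [hir]
  -- value of trace for Ur
  have hUrval : Matrix.trace ((S - Ur * Urᵀ * S)ᵀ * (S - Ur * Urᵀ * S)) =
      ∑ i ∈ Finset.Ico r (min m n), σ i ^ 2 := by
    rw [main Ur hUr1, hUrsum, trS]
    rcases le_or_gt r (min m n) with h | h
    · rw [Finset.range_eq_Ico, Finset.range_eq_Ico,
        ← Finset.sum_Ico_consecutive (fun i => σ i ^ 2) (Nat.zero_le r) h]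
      ring
    · rw [Finset.Ico_eq_empty (by omega), Finset.sum_empty]
      have h2 : ∑ i ∈ Finset.range r, σ i ^ 2 = ∑ i ∈ Finset.range (min m n), σ i ^ 2 := by
        symm
        apply Finset.sum_subset (Finset.range_subset_range.mpr h.le)
        intro x _ hx
        have hge : min m n ≤ x := by
          by_contra hc
          exact hx (Finset.mem_range.mpr (lt_of_not_ge hc))
        rw [hσ0 x hge]; ring
      rw [h2]; ring
  constructor
  · intro W hW
    rw [frob_eq_trace, frob_eq_trace]
    apply Real.sqrt_le_sqrt
    rw [main Ur hUr1, main W hW, hUrsum]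
    have hQ := hQorth W hW
    have hb : ∑ i : Fin m, ((Uᵀ * W) * (Uᵀ * W)ᵀ) i i * σ i ^ 2 ≤
        ∑ i ∈ Finset.range r, σ i ^ 2 := by
      have hw := weighted_bound hrm σ hnn hord
        (fun i => ((Uᵀ * W) * (Uᵀ * W)ᵀ) i i)
        (fun i => by
          show (0:ℝ) ≤ ((Uᵀ * W) * (Uᵀ * W)ᵀ) i i
          rw [Matrix.mul_apply]
          exact Finset.sum_nonneg fun k _ => by
            simp only [Matrix.transpose_apply]
            exact mul_self_nonneg _)
        (fun i => proj_diag_bound _ hQ i)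
        (by
          show ∑ i : Fin m, ((Uᵀ * W) * (Uᵀ * W)ᵀ) i i = (r : ℝ)
          rw [← trace_QQT (Uᵀ * W) hQ]
          rfl)
      calc ∑ i : Fin m, ((Uᵀ * W) * (Uᵀ * W)ᵀ) i i * σ i ^ 2
          = ∑ i : Fin m, σ i ^ 2 * ((Uᵀ * W) * (Uᵀ * W)ᵀ) i i :=
            Finset.sum_congr rfl fun i _ => mul_comm _ _
        _ ≤ _ := hw
    linarith
  · rw [frob_eq_trace, hUrval]
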